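/- Let V be a nonempty finite set and r : V × V → [0,∞) with r(x,x) = 0 for all x ∈ V. Then for every x₀ ∈ V, the Donsker–Varadhan functional evaluated at the Dirac measure δ_{x₀} satisfies 𝔍(δ_{x₀}) = Σ_{y ∈ V, y ≠ x₀} r(x₀, y); that is, the supremum over all positive functions u : V → (0,∞) of −(Lu)(x₀)/u(x₀) equals Σ_{y ≠ x₀} r(x₀, y). -/

import Mathlib

open Filter Topology Finset

/-- The Donsker–Varadhan level-two rate functional of the Markov chain on the finite
set `V` with jump rates `r`, evaluated at a weight function `ω` on `V`:
`𝔍(ω) = sup_{u > 0} Σ_x ω(x) · (−(Lu)(x)/u(x))`, where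
`(Lu)(x) = Σ_y r(x,y)(u(y) − u(x))`, viewed as an element of `[0,∞]`. -/
noncomputable def dvRate {V : Type*} [Fintype V] (r : V → V → ℝ) (ω : V → ℝ) :
    ENNReal :=
  ⨆ u : {u : V → ℝ // ∀ x, 0 < u x},
    ENNReal.ofReal (∑ x, ω x * (-((∑ y, r x y * (u.1 y - u.1 x)) / u.1 x)))

/-- The Donsker–Varadhan functional at the Dirac measure `δ_{x₀}` equals the total
jump rate out of `x₀`: `𝔍(δ_{x₀}) = Σ_{y ≠ x₀} r(x₀,y)`; equivalently, the supremum
over positive `u` of `−(Lu)(x₀)/u(x₀)` equals `Σ_{y ≠ x₀} r(x₀,y)`. -/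
theorem stmt9 {V : Type*} [Fintype V] [DecidableEq V] [Nonempty V]
    (r : V → V → ℝ) (hr : ∀ x y, 0 ≤ r x y) (hdiag : ∀ x, r x x = 0) (x₀ : V) :
    dvRate r (fun x => if x = x₀ then 1 else 0) =
      ENNReal.ofReal (∑ y ∈ Finset.univ.erase x₀, r x₀ y) ∧
    (⨆ u : {u : V → ℝ // ∀ x, 0 < u x},
        ENNReal.ofReal (-((∑ y, r x₀ y * (u.1 y - u.1 x₀)) / u.1 x₀))) =
      ENNReal.ofReal (∑ y ∈ Finset.univ.erase x₀, r x₀ y) := by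
  set S : ℝ := ∑ y ∈ Finset.univ.erase x₀, r x₀ y with hSdef
  have hS0 : 0 ≤ S := Finset.sum_nonneg fun y _ => hr x₀ y
  have hsumr : ∑ y, r x₀ y = S := by
    rw [hSdef, Finset.sum_erase _ (hdiag x₀)]
  have key : (⨆ u : {u : V → ℝ // ∀ x, 0 < u x},
      ENNReal.ofReal (-((∑ y, r x₀ y * (u.1 y - u.1 x₀)) / u.1 x₀))) =
      ENNReal.ofReal S := by
    apply le_antisymm
    · apply iSup_le; intro u
      apply ENNReal.ofReal_le_ofReal
      have hc := u.2 x₀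
      rw [← neg_div, div_le_iff₀ hc]
      have hneg : -(∑ y, r x₀ y * (u.1 y - u.1 x₀)) =
          ∑ y, r x₀ y * (u.1 x₀ - u.1 y) := by
        rw [← Finset.sum_neg_distrib]
        exact Finset.sum_congr rfl fun y _ => by ring
      rw [hneg]
      calc ∑ y, r x₀ y * (u.1 x₀ - u.1 y)
          ≤ ∑ y, r x₀ y * u.1 x₀ := by
            apply Finset.sum_le_sum
            intro y _
            exact mul_le_mul_of_nonneg_left (by linarith [u.2 y]) (hr x₀ y)
        _ = S * u.1 x₀ := by rw [← Finset.sum_mul, hsumr]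
    · apply ENNReal.le_of_forall_pos_le_add
      intro ε hε _
      set t : ℝ := (ε : ℝ) / (S + 1) with htdef
      have ht : 0 < t := div_pos (by exact_mod_cast hε) (by linarith)
      set u : V → ℝ := fun y => if y = x₀ then 1 else t with hudef
      have hu : ∀ x, 0 < u x := by
        intro x
        by_cases h : x = x₀ <;> simp [hudef, h, ht]
      have hux : u x₀ = 1 := if_pos rfl
      have hval : -((∑ y, r x₀ y * (u y - u x₀)) / u x₀) = S * (1 - t) := by
        rw [hux, div_one]
        have h0 : r x₀ x₀ * (u x₀ - 1) = 0 := by rw [hdiag]; ring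
        rw [← Finset.sum_erase (f := fun y => r x₀ y * (u y - 1)) Finset.univ h0]
        have : ∑ y ∈ Finset.univ.erase x₀, r x₀ y * (u y - 1) = S * (t - 1) := by
          rw [hSdef, Finset.sum_mul]
          apply Finset.sum_congr rfl
          intro y hy
          have huy : u y = t := if_neg (Finset.ne_of_mem_erase hy)
          rw [huy]
        rw [this]; ring
      have hSt : S * t ≤ (ε : ℝ) := by
        have h1 : S / (S + 1) ≤ 1 := by
          rw [div_le_one (by linarith)]; linarith
        calc S * t = (ε : ℝ) * (S / (S + 1)) := by rw [htdef]; ring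
          _ ≤ (ε : ℝ) * 1 := mul_le_mul_of_nonneg_left h1 ε.coe_nonneg
          _ = ε := mul_one _
      have h1 : S ≤ S * (1 - t) + ε := by nlinarith
      calc ENNReal.ofReal S ≤ ENNReal.ofReal (S * (1 - t) + ε) :=
            ENNReal.ofReal_le_ofReal h1
        _ ≤ ENNReal.ofReal (S * (1 - t)) + ENNReal.ofReal ε :=
            ENNReal.ofReal_add_le
        _ = ENNReal.ofReal (S * (1 - t)) + ε := by rw [ENNReal.ofReal_coe_nnreal]
        _ ≤ _ + ε := by
            apply add_le_add_left
            have := le_iSup (fun u : {u : V → ℝ // ∀ x, 0 < u x} =>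
              ENNReal.ofReal (-((∑ y, r x₀ y * (u.1 y - u.1 x₀)) / u.1 x₀))) ⟨u, hu⟩
            rwa [hval] at this
  have hdv : dvRate r (fun x => if x = x₀ then 1 else 0) =
      ⨆ u : {u : V → ℝ // ∀ x, 0 < u x},
        ENNReal.ofReal (-((∑ y, r x₀ y * (u.1 y - u.1 x₀)) / u.1 x₀)) := by
    unfold dvRate
    apply iSup_congr
    intro u
    congr 1
    rw [Finset.sum_eq_single x₀]
    · simp
    · intro b _ hb; simp [hb]
    · intro h; exact absurd (Finset.mem_univ x₀) h
  exact ⟨hdv.trans key, key⟩
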